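/- Let p : ℕ × ℕ → ℝ be the state probabilities of the approximate counting Markov chain: p(0,1) = 1, p(0,ℓ) = 0 for ℓ ≠ 1, p(n,0) = 0 for all n, and p(n+1,ℓ) = (1 - 2^{-ℓ}) p(n,ℓ) + 2^{-(ℓ-1)} p(n,ℓ-1) for ℓ ≥ 1. Then for all integers n ≥ 0 and ℓ ≥ 1, p(n,ℓ) = Σ_{i=0}^{ℓ-1} ( (-1)^i · 2^{-i(i-1)/2} / (Q_i · Q_{ℓ-1-i}) ) · (1 - 2^{-(ℓ-i)})^n. -/

import Mathlib

/-- `Q m = ∏_{k=1}^{m} (1 - 2^{-k})` as a real number, with `Q 0 = 1`. -/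
noncomputable def Q (m : ℕ) : ℝ :=
  ∏ k ∈ Finset.range m, (1 - 1 / 2 ^ (k + 1))

noncomputable def c (i : ℕ) : ℝ := (-1 : ℝ) ^ i * (1 / 2 ^ (i * (i - 1) / 2))

lemma one_sub_pos' (k : ℕ) : (0:ℝ) < 1 - 1 / 2 ^ (k + 1) := by
  have h : (2:ℝ) ≤ 2 ^ (k + 1) := by
    calc (2:ℝ) = 2 ^ 1 := (pow_one 2).symm
    _ ≤ 2 ^ (k + 1) := pow_le_pow_right₀ one_le_two (by omega)
  have h2 : (1:ℝ) / 2 ^ (k + 1) ≤ 1 / 2 := one_div_le_one_div_of_le (by norm_num) h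
  linarith

lemma Q_pos (m : ℕ) : 0 < Q m :=
  Finset.prod_pos fun k _ => one_sub_pos' k

lemma Q_succ (m : ℕ) : Q (m + 1) = Q m * (1 - 1 / 2 ^ (m + 1)) := by
  simp [Q, Finset.prod_range_succ]

lemma c_succ (i : ℕ) : c (i + 1) = -c i * (1 / 2 ^ i) := by
  have hexp : (i + 1) * ((i + 1) - 1) / 2 = i * (i - 1) / 2 + i := by
    have h1 : (i+1) * ((i+1) - 1) / 2 = (i+1).choose 2 := (Nat.choose_two_right (i+1)).symm
    have h2 : i * (i - 1) / 2 = i.choose 2 := (Nat.choose_two_right i).symm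
    rw [h1, h2, Nat.choose_succ_succ]
    show i.choose 1 + i.choose 2 = i.choose 2 + i
    rw [Nat.choose_one_right]
    omega
  have hp : (1:ℝ) / 2 ^ (i * (i - 1) / 2 + i) = (1 / 2 ^ (i * (i - 1) / 2)) * (1 / 2 ^ i) := by
    rw [pow_add]; ring
  simp only [c, hexp, hp, pow_succ]
  ring

lemma keyT (j d : ℕ) :
    (1 - 1/2^(j+d+2)) * (c (j+1) / (Q (j+1) * Q (d+1))) =
      c (j+1) / (Q (j+1) * Q d) + (-(1/2^(j+d+1)) * (c j / (Q j * Q (d+1)))) := by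
  rw [c_succ, Q_succ j, Q_succ d]
  have e1 : (2:ℝ)^(j+d+2) = 2^(j+1) * 2^(d+1) := by ring
  have e2 : (2:ℝ)^(j+d+1) = 2^j * 2^(d+1) := by ring
  have hQj := (Q_pos j).ne'
  have hQd := (Q_pos d).ne'
  have h1 := (one_sub_pos' j).ne'
  have h2 := (one_sub_pos' d).ne'
  have p1 : ((2:ℝ)^(j+1)) ≠ 0 := by positivity
  have p2 : ((2:ℝ)^(d+1)) ≠ 0 := by positivity
  have n1 : (2:ℝ)^(j+1) - 1 ≠ 0 := by
    have : (2:ℝ) ≤ 2^(j+1) := by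
      calc (2:ℝ) = 2^1 := (pow_one 2).symm
      _ ≤ 2^(j+1) := pow_le_pow_right₀ one_le_two (by omega)
    linarith
  have n2 : (2:ℝ)^(d+1) - 1 ≠ 0 := by
    have : (2:ℝ) ≤ 2^(d+1) := by
      calc (2:ℝ) = 2^1 := (pow_one 2).symm
      _ ≤ 2^(d+1) := pow_le_pow_right₀ one_le_two (by omega)
    linarith
  rw [e1, e2]
  field_simp
  ring

lemma keyS (n j d : ℕ) :
    (c (j+1) / (Q (j+1) * Q d)) * (1 - 1/2^(d+1))^(n+1)
      = (1 - 1/2^(j+d+2)) * ((c (j+1) / (Q (j+1) * Q d)) * (1 - 1/2^(d+1))^n)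
        + (1/2^(j+d+1)) * ((c j / (Q j * Q d)) * (1 - 1/2^(d+1))^n) := by
  have coef : (c (j+1) / (Q (j+1) * Q d)) * (1 - 1/2^(d+1))
      = (1 - 1/2^(j+d+2)) * (c (j+1) / (Q (j+1) * Q d))
        + (1/2^(j+d+1)) * (c j / (Q j * Q d)) := by
    rw [c_succ, Q_succ j]
    have e1 : (2:ℝ)^(j+d+2) = 2^(j+1) * 2^(d+1) := by ring
    have e2 : (2:ℝ)^(j+d+1) = 2^j * 2^(d+1) := by ring
    have hQj := (Q_pos j).ne'
    have hQd := (Q_pos d).ne'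
    have h1 := (one_sub_pos' j).ne'
    have p1 : ((2:ℝ)^(j+1)) ≠ 0 := by positivity
    have p2 : ((2:ℝ)^(d+1)) ≠ 0 := by positivity
    have n1 : (2:ℝ)^(j+1) - 1 ≠ 0 := by
      have : (2:ℝ) ≤ 2^(j+1) := by
        calc (2:ℝ) = 2^1 := (pow_one 2).symm
        _ ≤ 2^(j+1) := pow_le_pow_right₀ one_le_two (by omega)
      linarith
    rw [e1, e2]
    field_simp
    ring
  calc (c (j+1) / (Q (j+1) * Q d)) * (1 - 1/2^(d+1))^(n+1)
      = ((c (j+1) / (Q (j+1) * Q d)) * (1 - 1/2^(d+1))) * (1 - 1/2^(d+1))^n := by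
        rw [pow_succ]; ring
    _ = _ := by rw [coef]; ring

noncomputable def T (m : ℕ) : ℝ := ∑ i ∈ Finset.range (m+1), c i / (Q i * Q (m - i))

lemma T_rec (m : ℕ) : (1 - 1/2^(m+1)) * T (m+1) = (1 - 1/2^m) * T m := by
  have gdef : (1 - 1/2^(m+1)) * T (m+1)
      = ∑ i ∈ Finset.range (m+2), (1 - 1/2^(m+1)) * (c i / (Q i * Q (m+1-i))) := by
    rw [T, Finset.mul_sum]
  set g : ℕ → ℝ := fun i => (1 - 1/2^(m+1)) * (c i / (Q i * Q (m+1-i))) with hg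
  set A : ℕ → ℝ := fun i => c i / (Q i * Q (m-i)) with hA
  set V : ℕ → ℝ := fun i => -(1/2^m) * (c i / (Q i * Q (m-i))) with hV
  have hQm := (Q_pos m).ne'
  have h1m := (one_sub_pos' m).ne'
  have hg0 : g 0 = A 0 := by
    simp only [hg, hA, Nat.sub_zero]
    rw [Q_succ m]
    have hQ0 := (Q_pos 0).ne'
    have p1 : ((2:ℝ)^(m+1)) ≠ 0 := by positivity
    have n1 : (2:ℝ)^(m+1) - 1 ≠ 0 := by
      have : (2:ℝ) ≤ 2^(m+1) := by
        calc (2:ℝ) = 2^1 := (pow_one 2).symm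
        _ ≤ 2^(m+1) := pow_le_pow_right₀ one_le_two (by omega)
      linarith
    field_simp
  have hgm : g (m+1) = V m := by
    simp only [hg, hV]
    have h1 : m + 1 - (m+1) = 0 := by omega
    have h2 : m - m = 0 := by omega
    rw [h1, h2, c_succ, Q_succ m]
    have hQ0 := (Q_pos 0).ne'
    have p0 : ((2:ℝ)^m) ≠ 0 := by positivity
    have e : (2:ℝ)^(m+1) = 2^m * 2 := by ring
    rw [e]
    have n1 : (2:ℝ)^m * 2 - 1 ≠ 0 := by
      have : (1:ℝ) ≤ 2^m := one_le_pow₀ one_le_two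
      linarith
    field_simp
  have hmid : ∀ j ∈ Finset.range m, g (j+1) = A (j+1) + V j := by
    intro j hj
    have hj' := Finset.mem_range.mp hj
    simp only [hg, hA, hV]
    have hd1 : m - (j+1) = m - 1 - j := by omega
    have hd2 : m + 1 - (j+1) = (m - 1 - j) + 1 := by omega
    have hd3 : m - j = (m - 1 - j) + 1 := by omega
    have hd4 : (1:ℝ)/2^(m+1) = 1/2^(j + (m - 1 - j) + 2) := by
      rw [show j + (m - 1 - j) + 2 = m + 1 from by omega]
    have hd5 : (1:ℝ)/2^m = 1/2^(j + (m - 1 - j) + 1) := by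
      rw [show j + (m - 1 - j) + 1 = m from by omega]
    rw [hd1, hd2, hd3, hd4, hd5]
    exact keyT j (m - 1 - j)
  rw [gdef, Finset.sum_range_succ' g (m+1), Finset.sum_range_succ (fun i => g (i+1)) m,
    Finset.sum_congr rfl hmid, hg0, hgm, Finset.sum_add_distrib]
  have hA' : (∑ j ∈ Finset.range m, A (j+1)) + A 0 = ∑ i ∈ Finset.range (m+1), A i :=
    (Finset.sum_range_succ' A m).symm
  have hV' : (∑ j ∈ Finset.range m, V j) + V m = ∑ j ∈ Finset.range (m+1), V j :=
    (Finset.sum_range_succ V m).symm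
  have hfin : (1 - 1/2^m) * T m = ∑ i ∈ Finset.range (m+1), (A i + V i) := by
    rw [T, Finset.mul_sum]
    apply Finset.sum_congr rfl
    intro i _
    simp only [hA, hV]
    ring
  rw [hfin, Finset.sum_add_distrib, ← hA', ← hV']
  ring

lemma T_zero : T 0 = 1 := by
  simp [T, Q, c]

lemma T_succ_zero (m : ℕ) : T (m+1) = 0 := by
  induction m with
  | zero =>
    have h := T_rec 0
    rw [T_zero] at h
    norm_num at h
    linarith
  | succ k ih =>
    have h := T_rec (k+1)
    rw [ih, mul_zero] at h
    have h2 : (1:ℝ) - 1/2^(k+1+1) ≠ 0 := (one_sub_pos' (k+1)).ne'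
    exact (mul_eq_zero.mp h).resolve_left h2

lemma S_step (n m : ℕ) :
    (∑ i ∈ Finset.range (m+1), (c i / (Q i * Q (m - i))) * (1 - 1/2^(m+1-i))^(n+1))
      = (1 - 1/2^(m+1)) * (∑ i ∈ Finset.range (m+1),
          (c i / (Q i * Q (m-i))) * (1 - 1/2^(m+1-i))^n)
        + (1/2^m) * (∑ i ∈ Finset.range m,
          (c i / (Q i * Q (m-1-i))) * (1 - 1/2^(m-i))^n) := by
  set F : ℕ → ℝ := fun i => (c i / (Q i * Q (m-i))) * (1 - 1/2^(m+1-i))^(n+1) with hF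
  set P : ℕ → ℝ := fun i => (c i / (Q i * Q (m-i))) * (1 - 1/2^(m+1-i))^n with hP
  set R : ℕ → ℝ := fun i => (c i / (Q i * Q (m-1-i))) * (1 - 1/2^(m-i))^n with hR
  have hF0 : F 0 = (1 - 1/2^(m+1)) * P 0 := by
    simp only [hF, hP, Nat.sub_zero]
    rw [pow_succ]; ring
  have hmid : ∀ j ∈ Finset.range m, F (j+1) = (1 - 1/2^(m+1)) * P (j+1) + (1/2^m) * R j := by
    intro j hj
    have hj' := Finset.mem_range.mp hj
    simp only [hF, hP, hR]
    have hd1 : m - (j+1) = m - 1 - j := by omega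
    have hd2 : m + 1 - (j+1) = (m - 1 - j) + 1 := by omega
    have hd3 : m - j = (m - 1 - j) + 1 := by omega
    have hd4 : (1:ℝ)/2^(m+1) = 1/2^(j + (m - 1 - j) + 2) := by
      rw [show j + (m - 1 - j) + 2 = m + 1 from by omega]
    have hd5 : (1:ℝ)/2^m = 1/2^(j + (m - 1 - j) + 1) := by
      rw [show j + (m - 1 - j) + 1 = m from by omega]
    rw [hd1, hd2, hd3, hd4, hd5]
    exact keyS n j (m - 1 - j)
  rw [Finset.sum_range_succ' F m, Finset.sum_congr rfl hmid, hF0, Finset.sum_add_distrib]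
  rw [Finset.sum_range_succ' P m, ← Finset.mul_sum, ← Finset.mul_sum]
  ring

/-- For the approximate-counting Markov chain with `p 0 1 = 1`,
`p 0 ℓ = 0` for `ℓ ≠ 1`, `p n 0 = 0` and
`p (n+1) ℓ = (1 - 2^{-ℓ}) p n ℓ + 2^{-(ℓ-1)} p n (ℓ-1)` for `ℓ ≥ 1`, we have,
for all `n ≥ 0` and `ℓ ≥ 1`,
`p n ℓ = Σ_{i=0}^{ℓ-1} ((-1)^i 2^{-i(i-1)/2} / (Q_i Q_{ℓ-1-i})) (1 - 2^{-(ℓ-i)})^n`. -/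
theorem approximate_counting_probabilities
    (p : ℕ → ℕ → ℝ)
    (h01 : p 0 1 = 1) (h0 : ∀ l : ℕ, l ≠ 1 → p 0 l = 0)
    (hz : ∀ n : ℕ, p n 0 = 0)
    (hrec : ∀ n m : ℕ,
      p (n + 1) (m + 1) = (1 - 1 / 2 ^ (m + 1)) * p n (m + 1) + (1 / 2 ^ m) * p n m) :
    ∀ n l : ℕ, 1 ≤ l →
      p n l = ∑ i ∈ Finset.range l,
        ((-1 : ℝ) ^ i * (1 / 2 ^ (i * (i - 1) / 2)) / (Q i * Q (l - 1 - i))) *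
          (1 - 1 / 2 ^ (l - i)) ^ n := by
  have main : ∀ n l : ℕ, 1 ≤ l →
      p n l = ∑ i ∈ Finset.range l, (c i / (Q i * Q (l - 1 - i))) * (1 - 1/2^(l-i)) ^ n := by
    intro n
    induction n with
    | zero =>
      intro l hl
      obtain ⟨m, rfl⟩ : ∃ m, l = m + 1 := ⟨l - 1, by omega⟩
      have hsum : (∑ i ∈ Finset.range (m+1),
          (c i / (Q i * Q (m + 1 - 1 - i))) * (1 - 1/2^(m+1-i)) ^ 0) = T m := by
        rw [T]
        apply Finset.sum_congr rfl
        intro i _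
        rw [pow_zero, mul_one]
        congr 2 <;> omega
      rw [hsum]
      cases m with
      | zero => rw [T_zero, h01]
      | succ k =>
        rw [T_succ_zero k]
        exact h0 (k+2) (by omega)
    | succ n ih =>
      intro l hl
      obtain ⟨m, rfl⟩ : ∃ m, l = m + 1 := ⟨l - 1, by omega⟩
      rw [hrec n m]
      have h1 : p n (m+1) = ∑ i ∈ Finset.range (m+1),
          (c i / (Q i * Q (m - i))) * (1 - 1/2^(m+1-i)) ^ n := by
        have := ih (m+1) (by omega)
        rw [this]
        apply Finset.sum_congr rfl
        intro i _
        congr 3 <;> omega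
      have h2 : p n m = ∑ i ∈ Finset.range m,
          (c i / (Q i * Q (m-1-i))) * (1 - 1/2^(m-i)) ^ n := by
        cases m with
        | zero => simp [hz]
        | succ k =>
          have := ih (k+1) (by omega)
          rw [this]
      rw [h1, h2, ← S_step n m]
      apply Finset.sum_congr rfl
      intro i _
      congr 3 <;> omega
  intro n l hl
  rw [main n l hl]
  simp only [c]
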